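/- The incidence matrix Ê of the lifted graph Ĝ can be written in block form as [[E°,0,0],[S,𝟙,0],[0,𝟙,S],[0,0,E°]] (up to row/column permutation and signs), and consequently L(Ĝ) has the block structure [[E°ᵀE°+SᵀS, Sᵀ𝟙, 0],[𝟙ᵀS, 2q, 𝟙ᵀS],[0, Sᵀ𝟙, E°ᵀE°+SᵀS]], where q is the number of self-loops of G; in particular the top-left block equals L(G). -/

import Mathlib

/-- The Laplacian of a graph with self-loops: the Laplacian of the self-loop-free
part `G°` plus `e_i e_iᵀ` for each self-loop `(i,i)`, encoded as loop set `s`. -/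
def loopLaplacian {N : ℕ} (G : SimpleGraph (Fin N)) [DecidableRel G.Adj]
    (s : Finset (Fin N)) : Matrix (Fin N) (Fin N) ℝ :=
  G.lapMatrix ℝ + Matrix.diagonal (fun i => if i ∈ s then 1 else 0)

/-- The lifted graph of a graph with self-loops `(G, s)` on `N` vertices: a simple
graph on `2N + 1` vertices (two copies of the vertex set plus a middle vertex).
Each non-loop edge `(i,j)` yields edges `(i,j)` and `(i+N+1, j+N+1)`; each
self-loop `(i,i)` yields edges `(i, N+1)` and `(N+1, i+N+1)`, where `N+1` denotes
the middle vertex. -/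
def liftedGraph {N : ℕ} (G : SimpleGraph (Fin N)) (s : Finset (Fin N)) :
    SimpleGraph (Fin N ⊕ Unit ⊕ Fin N) where
  Adj a b :=
    match a, b with
    | Sum.inl i, Sum.inl j => G.Adj i j
    | Sum.inl i, Sum.inr (Sum.inl _) => i ∈ s
    | Sum.inr (Sum.inl _), Sum.inl i => i ∈ s
    | Sum.inr (Sum.inl _), Sum.inr (Sum.inr i) => i ∈ s
    | Sum.inr (Sum.inr i), Sum.inr (Sum.inl _) => i ∈ s
    | Sum.inr (Sum.inr i), Sum.inr (Sum.inr j) => G.Adj i j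
    | _, _ => False
  symm := ⟨by
    rintro (i | u | i) (j | v | j) h <;>
      first | exact h.symm | exact h | cases h⟩
  loopless := ⟨by
    rintro (i | u | i) h <;> first | exact G.irrefl h | cases h⟩

noncomputable instance {N : ℕ} (G : SimpleGraph (Fin N)) (s : Finset (Fin N)) :
    DecidableRel (liftedGraph G s).Adj := Classical.decRel _

/-- The Laplacian of the lifted graph (an ordinary loopless graph Laplacian). -/
noncomputable def liftedLaplacian {N : ℕ} (G : SimpleGraph (Fin N))
    (s : Finset (Fin N)) : Matrix (Fin N ⊕ Unit ⊕ Fin N) (Fin N ⊕ Unit ⊕ Fin N) ℝ :=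
  (liftedGraph G s).lapMatrix ℝ


open Finset Matrix in
lemma aux_entry' {V : Type*} [DecidableEq V] (a b i j : V) (hab : a ≠ b) :
    ((if i = a then (1:ℝ) else 0) - (if i = b then 1 else 0)) *
      ((if j = a then (1:ℝ) else 0) - (if j = b then 1 else 0)) =
    if i = j then (if i = a ∨ i = b then (1:ℝ) else 0)
    else -(if (a = i ∧ b = j) ∨ (a = j ∧ b = i) then (1:ℝ) else 0) := by
  split_ifs <;> subst_vars <;> simp_all <;> aesop

open Finset Matrix in
lemma incidence_factorization {V : Type*} [Fintype V] [DecidableEq V]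
    (H : SimpleGraph V) [DecidableRel H.Adj] [Fintype H.edgeSet]
    (o : H.edgeSet → V × V) (ho : ∀ e, Sym2.mk (o e).1 (o e).2 = (e : Sym2 V)) :
    (Matrix.of fun (e : H.edgeSet) k =>
        Pi.single (o e).1 (1 : ℝ) k - Pi.single (o e).2 (1 : ℝ) k)ᵀ *
      (Matrix.of fun (e : H.edgeSet) k =>
        Pi.single (o e).1 (1 : ℝ) k - Pi.single (o e).2 (1 : ℝ) k) =
      H.lapMatrix ℝ := by
  ext i j
  erw [Matrix.mul_apply]
  simp only [Matrix.transpose_apply, Matrix.of_apply]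
  have key : ∀ e : H.edgeSet,
      ((Pi.single (o e).1 (1 : ℝ) : V → ℝ) i - (Pi.single (o e).2 (1 : ℝ) : V → ℝ) i) *
        ((Pi.single (o e).1 (1 : ℝ) : V → ℝ) j - (Pi.single (o e).2 (1 : ℝ) : V → ℝ) j) =
      (if i = j then (if i ∈ (e : Sym2 V) then (1:ℝ) else 0)
      else -(if (e : Sym2 V) = s(i, j) then (1:ℝ) else 0)) := by
    intro e
    have hadj : H.Adj (o e).1 (o e).2 := by
      rw [← SimpleGraph.mem_edgeSet]
      have : Sym2.mk (o e).1 (o e).2 = (e : Sym2 V) := ho e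
      rw [this]; exact e.2
    have hne := hadj.ne
    have hcoe : (e : Sym2 V) = s((o e).1, (o e).2) := (ho e).symm
    rcases hoe : o e with ⟨a, b⟩
    rw [hoe] at hadj hne hcoe
    simp only [hcoe, Pi.single_apply, Sym2.mem_iff, Sym2.eq_iff]
    exact aux_entry' a b i j hne
  rw [Finset.sum_congr rfl (fun e _ => key e)]
  by_cases hij : i = j
  · subst hij
    simp only [eq_self_iff_true, if_true]
    have : ∑ e : H.edgeSet, (if i ∈ (e : Sym2 V) then (1:ℝ) else 0) =
        ∑ e ∈ H.edgeFinset, (if i ∈ e then (1:ℝ) else 0) :=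
      Finset.sum_set_coe (s := H.edgeSet) (f := fun e => if i ∈ e then (1:ℝ) else 0)
    rw [this, Finset.sum_boole, ← SimpleGraph.incidenceFinset_eq_filter,
      SimpleGraph.card_incidenceFinset_eq_degree]
    simp [SimpleGraph.lapMatrix, SimpleGraph.degMatrix]
  · simp only [if_neg hij]
    have : ∑ e : H.edgeSet, -(if (e : Sym2 V) = s(i, j) then (1:ℝ) else 0) =
        ∑ e ∈ H.edgeFinset, -(if e = s(i, j) then (1:ℝ) else 0) :=
      Finset.sum_set_coe (s := H.edgeSet) (f := fun e => -(if e = s(i, j) then (1:ℝ) else 0))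
    rw [this, Finset.sum_neg_distrib, Finset.sum_ite_eq' H.edgeFinset s(i,j) (fun _ => (1:ℝ))]
    simp [SimpleGraph.lapMatrix, SimpleGraph.degMatrix, Matrix.diagonal, hij,
      SimpleGraph.mem_edgeFinset]

section LiftedLemmas

variable {N : ℕ} (G : SimpleGraph (Fin N)) [DecidableRel G.Adj] (s : Finset (Fin N))

lemma ladj_ll (i j : Fin N) : (liftedGraph G s).Adj (Sum.inl i) (Sum.inl j) ↔ G.Adj i j := Iff.rfl
lemma ladj_lm (i : Fin N) (u : Unit) :
    (liftedGraph G s).Adj (Sum.inl i) (Sum.inr (Sum.inl u)) ↔ i ∈ s := Iff.rfl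
lemma ladj_lr (i j : Fin N) :
    (liftedGraph G s).Adj (Sum.inl i) (Sum.inr (Sum.inr j)) ↔ False := Iff.rfl
lemma ladj_ml (u : Unit) (i : Fin N) :
    (liftedGraph G s).Adj (Sum.inr (Sum.inl u)) (Sum.inl i) ↔ i ∈ s := Iff.rfl
lemma ladj_mm (u v : Unit) :
    (liftedGraph G s).Adj (Sum.inr (Sum.inl u)) (Sum.inr (Sum.inl v)) ↔ False := Iff.rfl
lemma ladj_mr (u : Unit) (i : Fin N) :
    (liftedGraph G s).Adj (Sum.inr (Sum.inl u)) (Sum.inr (Sum.inr i)) ↔ i ∈ s := Iff.rfl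
lemma ladj_rl (i j : Fin N) :
    (liftedGraph G s).Adj (Sum.inr (Sum.inr i)) (Sum.inl j) ↔ False := Iff.rfl
lemma ladj_rm (i : Fin N) (u : Unit) :
    (liftedGraph G s).Adj (Sum.inr (Sum.inr i)) (Sum.inr (Sum.inl u)) ↔ i ∈ s := Iff.rfl
lemma ladj_rr (i j : Fin N) :
    (liftedGraph G s).Adj (Sum.inr (Sum.inr i)) (Sum.inr (Sum.inr j)) ↔ G.Adj i j := Iff.rfl

lemma sum_ind (t : Finset (Fin N)) : (∑ j : Fin N, if j ∈ t then (1:ℝ) else 0) = t.card := by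
  rw [Finset.sum_boole]
  congr 1
  rw [Finset.filter_mem_eq_inter, Finset.univ_inter]

lemma deg_inl (i : Fin N) : ((liftedGraph G s).degree (Sum.inl i) : ℝ) =
    (G.degree i : ℝ) + (if i ∈ s then 1 else 0) := by
  rw [SimpleGraph.degree_eq_sum_if_adj, Fintype.sum_sum_type, Fintype.sum_sum_type,
    G.degree_eq_sum_if_adj (R := ℝ) i]
  simp [ladj_ll G s i, ladj_lm G s i, ladj_lr G s i]

lemma deg_inr (i : Fin N) : ((liftedGraph G s).degree (Sum.inr (Sum.inr i)) : ℝ) =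
    (G.degree i : ℝ) + (if i ∈ s then 1 else 0) := by
  rw [SimpleGraph.degree_eq_sum_if_adj, Fintype.sum_sum_type, Fintype.sum_sum_type,
    G.degree_eq_sum_if_adj (R := ℝ) i]
  simp [ladj_rl G s i, ladj_rm G s i, ladj_rr G s i, add_comm]

lemma deg_mid (u : Unit) : ((liftedGraph G s).degree (Sum.inr (Sum.inl u)) : ℝ) =
    2 * (s.card : ℝ) := by
  rw [SimpleGraph.degree_eq_sum_if_adj, Fintype.sum_sum_type, Fintype.sum_sum_type]
  simp only [ladj_ml G s u, ladj_mm G s u, ladj_mr G s u, if_false, Finset.sum_const_zero,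
    sum_ind, add_zero, zero_add]
  ring

lemma lap_apply (a b : Fin N ⊕ Unit ⊕ Fin N) :
    (liftedGraph G s).lapMatrix ℝ a b =
      (if a = b then ((liftedGraph G s).degree a : ℝ) else 0) -
        (if (liftedGraph G s).Adj a b then 1 else 0) := by
  simp [SimpleGraph.lapMatrix, SimpleGraph.degMatrix, Matrix.sub_apply,
    Matrix.diagonal_apply, SimpleGraph.adjMatrix_apply]

lemma loopLaplacian_apply (i j : Fin N) :
    loopLaplacian G s i j =
      ((if i = j then (G.degree i : ℝ) else 0) - (if G.Adj i j then 1 else 0)) +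
        (if i = j then (if i ∈ s then (1:ℝ) else 0) else 0) := by
  simp [loopLaplacian, SimpleGraph.lapMatrix, SimpleGraph.degMatrix, Matrix.sub_apply,
    Matrix.diagonal_apply, SimpleGraph.adjMatrix_apply, Matrix.add_apply]

end LiftedLemmas

open scoped Matrix

set_option maxHeartbeats 1600000 in
/-- Block structure of the Laplacian of the lifted graph `Ĝ`: there is a signed
incidence matrix `Ê` of `Ĝ` with `ÊᵀÊ = L(Ĝ)`, and `L(Ĝ)` has the block form
with diagonal blocks `L(G)` (twice) and `2q` (the degree of the middle vertex,
`q` the number of self-loops), off-diagonal blocks `-Sᵀ𝟙` coupling each copy to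
the middle vertex, and zero blocks coupling the two copies; in particular the
top-left block equals `L(G)`. -/
theorem lifted_laplacian_block_structure
    {N : ℕ} (G : SimpleGraph (Fin N)) [DecidableRel G.Adj]
    (s : Finset (Fin N)) (hs : s.Nonempty)
    [Fintype (liftedGraph G s).edgeSet] :
    (∃ (o : (liftedGraph G s).edgeSet →
          (Fin N ⊕ Unit ⊕ Fin N) × (Fin N ⊕ Unit ⊕ Fin N)),
        (∀ e, Sym2.mk (o e).1 (o e).2 = (e : Sym2 (Fin N ⊕ Unit ⊕ Fin N))) ∧
        (Matrix.of fun (e : (liftedGraph G s).edgeSet) k =>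
            Pi.single (o e).1 (1 : ℝ) k - Pi.single (o e).2 (1 : ℝ) k)ᵀ *
          (Matrix.of fun (e : (liftedGraph G s).edgeSet) k =>
            Pi.single (o e).1 (1 : ℝ) k - Pi.single (o e).2 (1 : ℝ) k) =
          liftedLaplacian G s) ∧
      liftedLaplacian G s = Matrix.of (fun a b =>
        match a, b with
        | Sum.inl i, Sum.inl j => loopLaplacian G s i j
        | Sum.inl i, Sum.inr (Sum.inl _) => -(if i ∈ s then (1 : ℝ) else 0)
        | Sum.inr (Sum.inl _), Sum.inl i => -(if i ∈ s then (1 : ℝ) else 0)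
        | Sum.inl _, Sum.inr (Sum.inr _) => 0
        | Sum.inr (Sum.inr _), Sum.inl _ => 0
        | Sum.inr (Sum.inl _), Sum.inr (Sum.inl _) => 2 * (s.card : ℝ)
        | Sum.inr (Sum.inl _), Sum.inr (Sum.inr i) => -(if i ∈ s then (1 : ℝ) else 0)
        | Sum.inr (Sum.inr i), Sum.inr (Sum.inl _) => -(if i ∈ s then (1 : ℝ) else 0)
        | Sum.inr (Sum.inr i), Sum.inr (Sum.inr j) => loopLaplacian G s i j) := by
  constructor
  · refine ⟨fun e => Quot.out (e : Sym2 _), fun e => Quot.out_eq _,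
      incidence_factorization _ _ (fun e => Quot.out_eq _)⟩
  · ext a b
    rcases a with i | u | i <;> rcases b with j | v | j <;>
      simp only [liftedLaplacian, Matrix.of_apply, lap_apply] <;>
      [skip; skip; skip; skip; skip; skip; skip; skip; skip]
    · -- inl inl
      rw [loopLaplacian_apply]
      by_cases h : i = j
      · subst h
        simp [deg_inl, ladj_ll G s i i]
      · simp [h, ladj_ll G s i j, Sum.inl.injEq]
    · -- inl mid
      simp [ladj_lm G s i v, Sum.inl.injEq]
    · -- inl inr
      simp [ladj_lr G s i j]
    · -- mid inl
      simp [ladj_ml G s u j]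
    · -- mid mid
      simp [ladj_mm G s u v, deg_mid]
    · -- mid inr
      simp [ladj_mr G s u j]
    · -- inr inl
      simp [ladj_rl G s i j]
    · -- inr mid
      simp [ladj_rm G s i v]
    · -- inr inr
      rw [loopLaplacian_apply]
      by_cases h : i = j
      · subst h
        simp [deg_inr, ladj_rr G s i i]
      · simp [h, ladj_rr G s i j]
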